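/- Let R = k[[r₁,…,r_m]] be a formal power series ring over a field k with maximal ideal 𝔪 = (r₁,…,r_m). Let Q = R[ξ₁,…,ξ_j, ξ_{j+1}^{±1},…,ξ_n^{±1}] be a Laurent-polynomial ring over R and let W = −ξ₁⋯ξ_j + Σ_α b_α ξ^α, where the sum ranges over a finite set of multi-indices α ∈ (ℤ≥0)^j × ℤ^{n−j} and each b_α ∈ 𝔪. Let S ⊂ (ℤ≥0)^j × ℤ^{n−j} be the set of exponent vectors whose first j entries include at least one zero. Then the natural map from the 𝔪-adic completion of the free R-module ⊕_{α∈S} R·ξ^α to the 𝔪-adic completion of Q/(W) is an isomorphism of R-modules. -/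

import Mathlib

/-- The maximal ideal `𝔪 = (r₁, …, r_m)` of the formal power series ring `k[[r₁,…,r_m]]`. -/
noncomputable def psMaxIdeal (k : Type*) [Field k] (m : ℕ) :
    Ideal (MvPowerSeries (Fin m) k) :=
  Ideal.span (Set.range fun i : Fin m => (MvPowerSeries.X i : MvPowerSeries (Fin m) k))

/-- Exponents of Laurent monomials: nonnegative in the first `j` variables, arbitrary
integers in the remaining `d` variables. -/
abbrev LaurentExp (j d : ℕ) : Type := (Fin j → ℕ) × (Fin d → ℤ)

/-- The Laurent polynomial ring `R[ξ₁,…,ξ_j, ξ_{j+1}^{±1},…,ξ_n^{±1}]` over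
`R = k[[r₁,…,r_m]]`. -/
abbrev LaurentRing (k : Type*) [Field k] (m j d : ℕ) :=
  AddMonoidAlgebra (MvPowerSeries (Fin m) k) (LaurentExp j d)

/-- The monomial `ξ^α` with coefficient `r`. -/
noncomputable def lmono {k : Type*} [Field k] {m j d : ℕ} (α : LaurentExp j d)
    (r : MvPowerSeries (Fin m) k) : LaurentRing k m j d :=
  AddMonoidAlgebra.single α r

open Submodule

/-- The exponent `(1,…,1,0,…,0)` of `ξ₁⋯ξ_j`. -/
def eExp (j d : ℕ) : LaurentExp j d := (fun _ => 1, 0)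

/-- The monomial embedding. -/
noncomputable def embS (R : Type*) [CommRing R] (j d : ℕ) :
    ({a : LaurentExp j d // ∃ i : Fin j, a.1 i = 0} →₀ R)
      →ₗ[R] AddMonoidAlgebra R (LaurentExp j d) :=
  Finsupp.lsum R fun α => LinearMap.toSpanSingleton R _ (AddMonoidAlgebra.single α.1 (1 : R))

theorem embS_eq_mapDomain {R : Type*} [CommRing R] {j d : ℕ} (x : {a : LaurentExp j d // ∃ i : Fin j, a.1 i = 0} →₀ R) :
    (embS R j d x).coeff = Finsupp.mapDomain Subtype.val x := by
  rw [embS, Finsupp.lsum_apply, Finsupp.mapDomain, AddMonoidAlgebra.coeff_finsuppSum]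
  refine Finsupp.sum_congr fun a _ => ?_
  rw [LinearMap.toSpanSingleton_apply, AddMonoidAlgebra.smul_single, smul_eq_mul, mul_one,
    AddMonoidAlgebra.coeff_single]

theorem embS_coeff_mem {R : Type*} [CommRing R] {j d : ℕ} (x : {a : LaurentExp j d // ∃ i : Fin j, a.1 i = 0} →₀ R)
    (I : Ideal R) (h : ∀ c, (embS R j d x).coeff c ∈ I) : ∀ a, x a ∈ I := by
  intro a
  have := h a.1
  rwa [embS_eq_mapDomain, Finsupp.mapDomain_apply Subtype.val_injective] at this

theorem finsupp_mem_smul_top_iff {R : Type*} [CommRing R] {α : Type*} (I : Ideal R)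
    (x : α →₀ R) : x ∈ I • (⊤ : Submodule R (α →₀ R)) ↔ ∀ a, x a ∈ I := by
  constructor
  · intro hx
    refine Submodule.smul_induction_on hx (fun r hr m _ a => ?_) (fun u v hu hv a => ?_)
    · rw [Finsupp.smul_apply]
      exact Ideal.mul_mem_right _ _ hr
    · rw [Finsupp.add_apply]
      exact Ideal.add_mem _ (hu a) (hv a)
  · intro hx
    have : x = ∑ a ∈ x.support, (x a) • Finsupp.single a (1 : R) := by
      conv_lhs => rw [← Finsupp.sum_single x]
      rw [Finsupp.sum]
      refine Finset.sum_congr rfl fun a _ => ?_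
      rw [Finsupp.smul_single, smul_eq_mul, mul_one]
    rw [this]
    exact Submodule.sum_mem _ fun a _ =>
      Submodule.smul_mem_smul (hx a) Submodule.mem_top

theorem amalg_mem_smul_top_iff {R : Type*} [CommRing R] {G : Type*} [AddCommMonoid G] (I : Ideal R)
    (x : AddMonoidAlgebra R G) :
    x ∈ I • (⊤ : Submodule R (AddMonoidAlgebra R G)) ↔ ∀ a, x.coeff a ∈ I := by
  constructor
  · intro hx
    refine Submodule.smul_induction_on hx (fun r hr m _ a => ?_) (fun u v hu hv a => ?_)
    · rw [AddMonoidAlgebra.coeff_smul, Finsupp.smul_apply]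
      exact Ideal.mul_mem_right _ _ hr
    · rw [AddMonoidAlgebra.coeff_add, Finsupp.add_apply]
      exact Ideal.add_mem _ (hu a) (hv a)
  · intro hx
    have : x = ∑ a ∈ x.coeff.support, (x.coeff a) • AddMonoidAlgebra.single a (1 : R) := by
      conv_lhs => rw [← AddMonoidAlgebra.sum_coeff_single x]
      rw [Finsupp.sum]
      refine Finset.sum_congr rfl fun a _ => ?_
      rw [AddMonoidAlgebra.smul_single, smul_eq_mul, mul_one]
    rw [this]
    exact Submodule.sum_mem _ fun a _ =>
      Submodule.smul_mem_smul (hx a) Submodule.mem_top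

/-- coefficients of a product. -/

theorem amalg_mul_coeff_mem {R : Type*} [CommRing R] {G : Type*} [AddCommMonoid G]
    (I J : Ideal R) (x y : AddMonoidAlgebra R G)
    (hx : ∀ a, x.coeff a ∈ I) (hy : ∀ a, y.coeff a ∈ J) (c : G) : (x * y).coeff c ∈ I * J := by
  classical
  rw [AddMonoidAlgebra.coeff_mul]
  refine Submodule.sum_mem _ fun a _ => Submodule.sum_mem _ fun b _ => ?_
  dsimp only
  split_ifs
  · exact Ideal.mul_mem_mul (hx a) (hy b)
  · exact zero_mem _

theorem core_inj {R : Type*} [CommRing R] {j d : ℕ} (𝔪 : Ideal R)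
    (B : AddMonoidAlgebra R (LaurentExp j d)) (hB : ∀ c, B.coeff c ∈ 𝔪)
    (W : AddMonoidAlgebra R (LaurentExp j d))
    (hW : W = - AddMonoidAlgebra.single (eExp j d) (1 : R) + B)
    (t : ℕ) (f g q : AddMonoidAlgebra R (LaurentExp j d))
    (hf : ∀ c : LaurentExp j d, (¬ ∃ i, c.1 i = 0) → f.coeff c = 0)
    (hq : ∀ c, q.coeff c ∈ 𝔪 ^ t)
    (heq : f = q + g * W) : ∀ c, f.coeff c ∈ 𝔪 ^ t := by
  have hBW : B - W = AddMonoidAlgebra.single (eExp j d) (1 : R) := by rw [hW]; ring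
  have hkey : g * AddMonoidAlgebra.single (eExp j d) (1 : R) = q + g * B - f := by
    rw [← hBW, heq]; ring
  have key : ∀ s, s ≤ t → ∀ c, g.coeff c ∈ 𝔪 ^ s := by
    intro s
    induction s with
    | zero => intro _ c; simp [Ideal.one_eq_top]
    | succ s ih =>
      intro hst c
      have hg := ih (le_trans (Nat.le_succ s) hst)
      have hfc : f.coeff (eExp j d + c) = 0 := by
        refine hf _ ?_
        rintro ⟨i, hi⟩
        simp [eExp] at hi
      have hcoeff : (g * AddMonoidAlgebra.single (eExp j d) (1 : R)).coeff (eExp j d + c) = g.coeff c := by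
        rw [AddMonoidAlgebra.coeff_mul_single_eq_coeff_mul (x := g) (r := 1) (m := eExp j d)
          (m₁ := eExp j d + c) c
          (fun a _ => by rw [add_comm a (eExp j d)]; exact add_right_inj (eExp j d)), mul_one]
      have hval : g.coeff c = q.coeff (eExp j d + c) + (g * B).coeff (eExp j d + c) - f.coeff (eExp j d + c) := by
        rw [← hcoeff, hkey, AddMonoidAlgebra.coeff_sub, AddMonoidAlgebra.coeff_add, Finsupp.sub_apply, Finsupp.add_apply]
      rw [hval, hfc, sub_zero]
      refine Ideal.add_mem _ ?_ ?_
      · exact Ideal.pow_le_pow_right hst (hq _)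
      · rw [pow_succ]
        exact amalg_mul_coeff_mem (𝔪 ^ s) 𝔪 g B hg hB _
  intro c
  have h1 : (g * W).coeff c ∈ 𝔪 ^ t := by
    have := amalg_mul_coeff_mem (𝔪 ^ t) ⊤ g W (key t le_rfl) (fun _ => trivial) c
    rwa [Ideal.mul_top] at this
  rw [heq, AddMonoidAlgebra.coeff_add, Finsupp.add_apply]
  exact Ideal.add_mem _ (hq c) h1

theorem core_surj {R : Type*} [CommRing R] {j d : ℕ} (𝔪 : Ideal R)
    (T : Finset (LaurentExp j d)) (b : LaurentExp j d → R)
    (hb : ∀ α ∈ T, b α ∈ 𝔪)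
    (W : AddMonoidAlgebra R (LaurentExp j d))
    (hW : W = - AddMonoidAlgebra.single (eExp j d) (1 : R)
        + ∑ α ∈ T, AddMonoidAlgebra.single α (b α))
    (SpanS : Submodule R (AddMonoidAlgebra R (LaurentExp j d)))
    (hS : ∀ (β : LaurentExp j d), (∃ i, β.1 i = 0) →
        AddMonoidAlgebra.single β (1 : R) ∈ SpanS)
    (t : ℕ) (x : AddMonoidAlgebra R (LaurentExp j d)) :
    x ∈ SpanS ⊔ (Ideal.span {W}).restrictScalars R
        ⊔ 𝔪 ^ t • (⊤ : Submodule R (AddMonoidAlgebra R (LaurentExp j d))) := by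
  set B : AddMonoidAlgebra R (LaurentExp j d) :=
    ∑ α ∈ T, AddMonoidAlgebra.single α (b α) with hBdef
  -- step 1: every single is in SpanS ⊔ (W) ⊔ 𝔪 • ⊤
  have hsingle : ∀ β : LaurentExp j d, AddMonoidAlgebra.single β (1 : R) ∈
      SpanS ⊔ (Ideal.span {W}).restrictScalars R ⊔ 𝔪 • ⊤ := by
    intro β
    by_cases hβ : ∃ i : Fin j, β.1 i = 0
    · exact mem_sup_left (mem_sup_left (hS β hβ))
    · push_neg at hβ
      set γ : LaurentExp j d := (fun i => β.1 i - 1, β.2) with hγ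
      have hβγ : γ + eExp j d = β := by
        refine Prod.ext ?_ ?_
        · funext i
          have := hβ i
          show β.1 i - 1 + 1 = β.1 i
          omega
        · show β.2 + 0 = β.2
          simp
      have hsplit : AddMonoidAlgebra.single β (1 : R)
          = AddMonoidAlgebra.single γ (1 : R) * B - AddMonoidAlgebra.single γ (1 : R) * W := by
        rw [← mul_sub]
        have hBW : B - W = AddMonoidAlgebra.single (eExp j d) (1 : R) := by rw [hW]; ring
        rw [hBW, AddMonoidAlgebra.single_mul_single, mul_one, hβγ]
      rw [hsplit]
      refine Submodule.sub_mem _ ?_ ?_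
      · apply mem_sup_right
        rw [hBdef, Finset.mul_sum]
        refine Submodule.sum_mem _ fun α hα => ?_
        rw [AddMonoidAlgebra.single_mul_single, one_mul]
        have h1 : AddMonoidAlgebra.single (γ + α) (b α)
            = (b α) • AddMonoidAlgebra.single (γ + α) (1 : R) := by
          rw [AddMonoidAlgebra.smul_single, smul_eq_mul, mul_one]
        rw [h1]
        exact Submodule.smul_mem_smul (hb α hα) Submodule.mem_top
      · apply mem_sup_left; apply mem_sup_right
        rw [Submodule.restrictScalars_mem]
        exact Ideal.mul_mem_left _ _ (Ideal.subset_span rfl)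
  -- step 2: everything is in SpanS ⊔ (W) ⊔ 𝔪 • ⊤
  have hall : ∀ y : AddMonoidAlgebra R (LaurentExp j d),
      y ∈ SpanS ⊔ (Ideal.span {W}).restrictScalars R ⊔ 𝔪 • ⊤ := by
    intro y
    have hy : y = ∑ a ∈ y.coeff.support, (y.coeff a) • AddMonoidAlgebra.single a (1 : R) := by
      conv_lhs => rw [← AddMonoidAlgebra.sum_coeff_single y]
      rw [Finsupp.sum]
      refine Finset.sum_congr rfl fun a _ => ?_
      rw [AddMonoidAlgebra.smul_single, smul_eq_mul, mul_one]
    rw [hy]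
    exact Submodule.sum_mem _ fun a _ => Submodule.smul_mem _ _ (hsingle a)
  -- step 3: induction on t
  induction t generalizing x with
  | zero =>
    apply mem_sup_right
    simp only [pow_zero, Ideal.one_eq_top, top_smul]
    trivial
  | succ t ih =>
    obtain ⟨u, hu, v, hv, rfl⟩ := Submodule.mem_sup.mp (ih x)
    refine Submodule.add_mem _ (mem_sup_left hu) ?_
    -- v ∈ 𝔪 ^ t • ⊤; show v ∈ ... ⊔ 𝔪 ^ (t+1) • ⊤
    refine Submodule.smul_induction_on hv (fun r hr z _ => ?_)
      (fun z w hz hw => Submodule.add_mem _ hz hw)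
    obtain ⟨u', hu', v', hv', rfl⟩ := Submodule.mem_sup.mp (hall z)
    rw [smul_add]
    refine Submodule.add_mem _ (mem_sup_left ?_) (mem_sup_right ?_)
    · exact Submodule.smul_mem _ _ hu'
    · have : r • v' ∈ 𝔪 ^ t • 𝔪 • (⊤ : Submodule R (AddMonoidAlgebra R (LaurentExp j d))) :=
        Submodule.smul_mem_smul hr hv'
      rwa [← Submodule.smul_assoc, smul_eq_mul, ← pow_succ] at this

theorem adicMap_bij {R : Type*} [CommRing R] (I : Ideal R)
    {M N : Type*} [AddCommGroup M] [Module R M] [AddCommGroup N] [Module R N]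
    (f : M →ₗ[R] N)
    (h : ∀ t : ℕ, Function.Bijective (LinearMap.reduceModIdeal (I ^ t) f)) :
    Function.Bijective (AdicCompletion.map I f) := by
  constructor
  · intro x y hxy
    refine AdicCompletion.ext fun t => (h t).injective ?_
    exact congrArg (fun z : AdicCompletion I N => z.val t) hxy
  · intro y
    have hx : ∀ t, ∃ a, LinearMap.reduceModIdeal (I ^ t) f a = y.val t :=
      fun t => (h t).surjective (y.val t)
    choose x hxs using hx
    have hcomp : ∀ {s t : ℕ} (hst : s ≤ t),
        AdicCompletion.transitionMap I M hst (x t) = x s := by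
      intro s t hst
      apply (h s).injective
      have h1 := congrArg (fun g : _ →ₗ[R] _ => g (x t))
        (AdicCompletion.transitionMap_comp_reduceModIdeal I f hst)
      simp only [LinearMap.coe_comp, Function.comp_apply] at h1
      rw [hxs s, ← y.property hst, ← hxs t]
      exact h1.symm
    refine ⟨⟨x, hcomp⟩, ?_⟩
    exact AdicCompletion.ext fun t => hxs t

set_option maxHeartbeats 1000000 in
theorem level_bij {R : Type*} [CommRing R] {j d : ℕ} (𝔪 : Ideal R)
    (T : Finset (LaurentExp j d)) (b : LaurentExp j d → R)
    (hb : ∀ α ∈ T, b α ∈ 𝔪)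
    (W : AddMonoidAlgebra R (LaurentExp j d))
    (hW : W = - AddMonoidAlgebra.single (eExp j d) (1 : R)
        + ∑ α ∈ T, AddMonoidAlgebra.single α (b α))
    (t : ℕ) :
    Function.Bijective (LinearMap.reduceModIdeal (𝔪 ^ t)
      ((Ideal.Quotient.mkₐ R (Ideal.span {W})).toLinearMap ∘ₗ embS R j d)) := by
  classical
  set π := (Ideal.Quotient.mkₐ R (Ideal.span {W})).toLinearMap with hπdef
  have surjπ : Function.Surjective π := by
    intro y
    obtain ⟨z, hz⟩ := Ideal.Quotient.mk_surjective y
    exact ⟨z, hz⟩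
  have hmapsmul : ∀ s : ℕ, Submodule.map π (𝔪 ^ s • ⊤) =
      𝔪 ^ s • (⊤ : Submodule R (AddMonoidAlgebra R (LaurentExp j d) ⧸ Ideal.span {W})) := by
    intro s
    rw [Submodule.map_smul'', Submodule.map_top, LinearMap.range_eq_top.mpr surjπ]
  have hB : ∀ c, (∑ α ∈ T, AddMonoidAlgebra.single α (b α) :
      AddMonoidAlgebra R (LaurentExp j d)).coeff c ∈ 𝔪 := by
    intro c
    rw [AddMonoidAlgebra.coeff_sum, Finsupp.finset_sum_apply]
    refine Submodule.sum_mem _ fun α hα => ?_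
    rw [AddMonoidAlgebra.coeff_single, Finsupp.single_apply]
    split_ifs
    · exact hb α hα
    · exact zero_mem _
  have hSrange : ∀ (β : LaurentExp j d), (∃ i, β.1 i = 0) →
      AddMonoidAlgebra.single β (1 : R) ∈ LinearMap.range (embS R j d) := by
    intro β hβ
    refine ⟨Finsupp.single ⟨β, hβ⟩ 1, ?_⟩
    rw [embS, Finsupp.lsum_single, LinearMap.toSpanSingleton_apply, one_smul]
  constructor
  · -- injectivity
    have key : ∀ x, π (embS R j d x) ∈ 𝔪 ^ t •
        (⊤ : Submodule R (AddMonoidAlgebra R (LaurentExp j d) ⧸ Ideal.span {W})) →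
        x ∈ 𝔪 ^ t • (⊤ : Submodule R _) := by
      intro x hx
      rw [← hmapsmul t] at hx
      obtain ⟨q, hqmem, hπq⟩ := hx
      have hker : embS R j d x - q ∈ Ideal.span {W} := by
        have h0 : π (embS R j d x - q) = 0 := by
          rw [map_sub, hπq, sub_self]
        rwa [hπdef, AlgHom.toLinearMap_apply, Ideal.Quotient.mkₐ_eq_mk,
          Ideal.Quotient.eq_zero_iff_mem] at h0
      obtain ⟨g, hg⟩ := Ideal.mem_span_singleton'.mp hker
      have heq : embS R j d x = q + g * W := by
        rw [hg]; ring
      have hf : ∀ c : LaurentExp j d, (¬ ∃ i, c.1 i = 0) → (embS R j d x).coeff c = 0 := by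
        intro c hc
        rw [embS_eq_mapDomain]
        refine Finsupp.mapDomain_notin_range _ _ ?_
        rintro ⟨⟨a, ha⟩, rfl⟩
        exact hc ha
      have hq' : ∀ c, q.coeff c ∈ 𝔪 ^ t := (amalg_mem_smul_top_iff _ _).mp hqmem
      have hcoeff := core_inj 𝔪 _ hB W hW t (embS R j d x) g q hf hq' heq
      rw [finsupp_mem_smul_top_iff]
      exact embS_coeff_mem x _ hcoeff
    intro a c hac
    obtain ⟨xa, rfl⟩ := Submodule.Quotient.mk_surjective _ a
    obtain ⟨xc, rfl⟩ := Submodule.Quotient.mk_surjective _ c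
    rw [LinearMap.reduceModIdeal_apply, LinearMap.reduceModIdeal_apply,
      Submodule.Quotient.eq] at hac
    rw [Submodule.Quotient.eq]
    refine key (xa - xc) ?_
    rw [map_sub, map_sub]
    exact hac
  · -- surjectivity
    intro y
    obtain ⟨n', rfl⟩ := Submodule.Quotient.mk_surjective _ y
    obtain ⟨q, rfl⟩ := surjπ n'
    have hq := core_surj 𝔪 T b hb W hW (LinearMap.range (embS R j d)) hSrange t q
    obtain ⟨u, hu, v, hv, rfl⟩ := Submodule.mem_sup.mp hq
    obtain ⟨u1, hu1, w, hw, rfl⟩ := Submodule.mem_sup.mp hu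
    obtain ⟨x, rfl⟩ := hu1
    refine ⟨Submodule.Quotient.mk x, ?_⟩
    rw [LinearMap.reduceModIdeal_apply, Submodule.Quotient.eq]
    have hπw : π w = 0 := by
      rw [hπdef, AlgHom.toLinearMap_apply, Ideal.Quotient.mkₐ_eq_mk,
        Ideal.Quotient.eq_zero_iff_mem]
      exact hw
    have hdiff : (LinearMap.comp π (embS R j d)) x - π (embS R j d x + w + v) = -(π v) := by
      rw [LinearMap.comp_apply, map_add, map_add, hπw]
      abel
    rw [hdiff]
    refine Submodule.neg_mem _ ?_
    rw [← hmapsmul t]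
    exact Submodule.mem_map_of_mem hv

set_option maxHeartbeats 1000000 in
set_option synthInstance.maxHeartbeats 1000000 in
/-- Let `R = k[[r₁,…,r_m]]` with maximal ideal `𝔪`,
`Q = R[ξ₁,…,ξ_j, ξ_{j+1}^{±1},…,ξ_n^{±1}]`, and
`W = −ξ₁⋯ξ_j + ∑_α b_α ξ^α` with finitely many coefficients `b_α ∈ 𝔪`.  Let `S` be the set
of exponent vectors whose first `j` entries include a zero.  Then the natural map from the
`𝔪`-adic completion of the free module `⊕_{α ∈ S} R·ξ^α` to the `𝔪`-adic completion of
`Q/(W)` is an isomorphism (i.e. bijective). -/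
theorem stmt_6 {k : Type*} [Field k] (m n j : ℕ)
    (T : Finset (LaurentExp j (n - j)))
    (b : LaurentExp j (n - j) → MvPowerSeries (Fin m) k)
    (hb : ∀ α ∈ T, b α ∈ psMaxIdeal k m)
    (W : LaurentRing k m j (n - j))
    (hW : W = - (lmono ((fun _ => 1 : Fin j → ℕ), (0 : Fin (n - j) → ℤ)) 1 : LaurentRing k m j (n - j))
            + ∑ α ∈ T, lmono α (b α)) :
    Function.Bijective
      (AdicCompletion.map (psMaxIdeal k m)
        ((Finsupp.lsum (MvPowerSeries (Fin m) k))
          (fun α : {a : LaurentExp j (n - j) // ∃ i : Fin j, a.1 i = 0} =>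
            LinearMap.toSpanSingleton (MvPowerSeries (Fin m) k)
              (LaurentRing k m j (n - j) ⧸ Ideal.span {W})
              (Ideal.Quotient.mk (Ideal.span {W}) (lmono α.1 1))))) := by
  classical
  have hW' : W = - AddMonoidAlgebra.single (eExp j (n-j)) (1 : MvPowerSeries (Fin m) k)
      + ∑ α ∈ T, AddMonoidAlgebra.single α (b α) := hW
  have hL : ((Finsupp.lsum (MvPowerSeries (Fin m) k))
      (fun α : {a : LaurentExp j (n - j) // ∃ i : Fin j, a.1 i = 0} =>
        LinearMap.toSpanSingleton (MvPowerSeries (Fin m) k)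
          (LaurentRing k m j (n - j) ⧸ Ideal.span {W})
          (Ideal.Quotient.mk (Ideal.span {W}) (lmono α.1 1)))) =
      (Ideal.Quotient.mkₐ (MvPowerSeries (Fin m) k) (Ideal.span {W})).toLinearMap
        ∘ₗ embS (MvPowerSeries (Fin m) k) j (n - j) := by
    refine Finsupp.lhom_ext fun a r => ?_
    rw [Finsupp.lsum_single, LinearMap.toSpanSingleton_apply, LinearMap.comp_apply,
      embS, Finsupp.lsum_single, LinearMap.toSpanSingleton_apply,
      AlgHom.toLinearMap_apply, map_smul, Ideal.Quotient.mkₐ_eq_mk]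
    rfl
  rw [hL]
  exact adicMap_bij _ _ (level_bij _ T b hb W hW')
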